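/- Let A₀ be a finite-dimensional commutative unital ℝ-algebra of dimension n, with an ℝ-linear functional ε : A₀ → ℝ such that the bilinear form β(x, y) = ε(x * y) is positive definite. Then there exist positive real numbers w₁, …, wₙ and an ℝ-algebra isomorphism Φ : A₀ ≃ (Fin n → ℝ) (the product algebra with pointwise operations) such that ε(x) = Σᵢ wᵢ · Φ(x)ᵢ for all x ∈ A₀. -/

import Mathlib

open Module

/-- Reindexing equiv for pi algebras over `ℝ`. -/
def piReindexAlg {ι κ : Type*} (σ : ι ≃ κ) : (ι → ℝ) ≃ₐ[ℝ] (κ → ℝ) :=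
  { Equiv.arrowCongr σ (Equiv.refl ℝ) with
    map_mul' := fun _ _ => rfl
    map_add' := fun _ _ => rfl
    commutes' := fun _ => rfl }

theorem stmt9 {A₀ : Type*} [CommRing A₀] [Algebra ℝ A₀] [FiniteDimensional ℝ A₀]
    (n : ℕ) (hn : Module.finrank ℝ A₀ = n)
    (ε : A₀ →ₗ[ℝ] ℝ) (hpos : ∀ x : A₀, x ≠ 0 → 0 < ε (x * x)) :
    ∃ w : Fin n → ℝ, (∀ i, 0 < w i) ∧
      ∃ Φ : A₀ ≃ₐ[ℝ] (Fin n → ℝ), ∀ x : A₀, ε x = ∑ i, w i * Φ x i := by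
  classical
  -- A₀ is reduced
  have hsq : ∀ x : A₀, x ≠ 0 → x * x ≠ 0 := by
    intro x hx h0
    have := hpos x hx
    rw [h0, map_zero] at this
    exact lt_irrefl 0 this
  haveI : IsReduced A₀ := by
    constructor
    intro x ⟨m, hm⟩
    by_contra hx
    have key : ∀ k : ℕ, x ^ (2 ^ k) ≠ 0 := by
      intro k
      induction k with
      | zero => simpa using hx
      | succ k ih =>
        have : x ^ 2 ^ (k+1) = x ^ 2 ^ k * x ^ 2 ^ k := by ring
        rw [this]
        exact hsq _ ih
    have hle : m ≤ 2 ^ m := Nat.le_of_lt (Nat.lt_two_pow_self (n := m))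
    exact key m (by
      have : x ^ (2 ^ m) = x ^ m * x ^ (2 ^ m - m) := by
        rw [← pow_add, Nat.add_sub_cancel' hle]
      rw [this, hm, zero_mul])
  haveI : IsArtinianRing A₀ := isArtinian_of_tower ℝ inferInstance
  haveI := (IsArtinianRing.setOfPred_isMaximal_finite A₀).to_subtype
  set ι := {I : Ideal A₀ | I.IsMaximal} with hι
  letI : ∀ I : ι, Field (A₀ ⧸ I.1) := fun I => @Ideal.Quotient.field _ _ I.1 I.2
  -- the CRT equivalence, as an algebra equivalence
  let e₀ : A₀ ≃+* ∀ I : ι, A₀ ⧸ I.1 := (IsArtinianRing.equivPi A₀).toRingEquiv.trans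
    (RingEquiv.piCongrLeft (fun I : ι => A₀ ⧸ I.1) (MaximalSpectrum.equivSubtype A₀))
  let e : A₀ ≃ₐ[ℝ] ∀ I : ι, A₀ ⧸ I.1 :=
    AlgEquiv.ofRingEquiv (f := e₀) (fun r => by
      funext I
      obtain ⟨J, hJ⟩ := (MaximalSpectrum.equivSubtype A₀).surjective I
      subst hJ
      simp [e₀, RingEquiv.piCongrLeft, Equiv.piCongrLeft_apply_apply]
      rfl)
  -- each factor has dimension 1
  have hdim : ∀ I : ι, finrank ℝ (A₀ ⧸ I.1) = 1 := by
    intro I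
    haveI : Algebra.IsAlgebraic ℝ (A₀ ⧸ I.1) := Algebra.IsAlgebraic.of_finite ℝ _
    obtain φ : (A₀ ⧸ I.1) →ₐ[ℝ] ℂ := IsAlgClosed.lift
    have hφinj : Function.Injective φ := φ.toRingHom.injective
    have hle : finrank ℝ (A₀ ⧸ I.1) ≤ 2 := by
      have := LinearMap.finrank_le_finrank_of_injective (f := φ.toLinearMap) hφinj
      simpa [Complex.finrank_real_complex] using this
    have hge : 0 < finrank ℝ (A₀ ⧸ I.1) := finrank_pos
    by_contra hne
    have h2 : finrank ℝ (A₀ ⧸ I.1) = 2 := by omega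
    -- φ is surjective, hence there is y with y * y = -1
    have hsurj : Function.Surjective φ := by
      have := (LinearMap.injective_iff_surjective_of_finrank_eq_finrank
        (f := φ.toLinearMap) (by rw [h2, Complex.finrank_real_complex])).mp hφinj
      exact this
    obtain ⟨y, hy⟩ := hsurj Complex.I
    have hy2 : y * y = -1 := by
      apply hφinj
      rw [map_mul, hy, map_neg, map_one, Complex.I_mul_I]
    -- transport to A₀ and contradict positivity
    set z : A₀ := e.symm (Pi.single I y) with hz
    set u : A₀ := e.symm (Pi.single I 1) with hu
    have hy0 : y ≠ 0 := by
      intro h; rw [h, mul_zero] at hy2; exact one_ne_zero (neg_eq_zero.mp hy2.symm)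
    have hsingle : ∀ (a b : A₀ ⧸ I.1),
        (Pi.single I a : ∀ J : ι, A₀ ⧸ J.1) * Pi.single I b = Pi.single I (a * b) := by
      intro a b
      funext J
      by_cases h : J = I
      · subst h; simp
      · simp [Pi.single_apply, h]
    have hz0 : z ≠ 0 := by
      intro h
      have : (Pi.single I y : ∀ J : ι, A₀ ⧸ J.1) = 0 := by
        have := congrArg e h
        simpa [hz] using this
      exact hy0 (by simpa using congrFun this I)
    have hu0 : u ≠ 0 := by
      intro h
      have : (Pi.single I (1 : A₀ ⧸ I.1) : ∀ J : ι, A₀ ⧸ J.1) = 0 := by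
        have := congrArg e h
        simpa [hu] using this
      have h1 : (1 : A₀ ⧸ I.1) = 0 := by simpa using congrFun this I
      exact one_ne_zero h1
    have hzz : z * z = -u := by
      rw [hz, hu, ← map_mul, ← map_neg]
      congr 1
      rw [hsingle, hy2]
      funext J
      by_cases h : J = I
      · subst h; simp
      · simp [Pi.single_apply, h]
    have huu : u * u = u := by
      rw [hu, ← map_mul, hsingle, mul_one]
    have h1 := hpos z hz0
    have h2' := hpos u hu0
    rw [hzz, map_neg] at h1
    rw [huu] at h2'
    -- ε u > 0 and -ε u > 0
    have : (0:ℝ) < -ε u := h1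
    have : (0:ℝ) < ε u := by
      have : ε (u * u) = ε u := by rw [huu]
      linarith [h2']
    linarith
  -- assemble the isomorphism
  have ψ : ∀ I : ι, (A₀ ⧸ I.1) ≃ₐ[ℝ] ℝ := by
    intro I
    have hbot : (⊥ : Subalgebra ℝ (A₀ ⧸ I.1)) = ⊤ :=
      Subalgebra.bot_eq_top_of_finrank_eq_one (hdim I)
    have hsurj : Function.Surjective (Algebra.ofId ℝ (A₀ ⧸ I.1)) := by
      intro x
      have : x ∈ (⊥ : Subalgebra ℝ (A₀ ⧸ I.1)) := hbot ▸ Algebra.mem_top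
      obtain ⟨r, hr⟩ := Algebra.mem_bot.mp this
      exact ⟨r, hr⟩
    have hinj : Function.Injective (Algebra.ofId ℝ (A₀ ⧸ I.1)) :=
      (Algebra.ofId ℝ (A₀ ⧸ I.1)).toRingHom.injective
    exact (AlgEquiv.ofBijective (Algebra.ofId ℝ (A₀ ⧸ I.1)) ⟨hinj, hsurj⟩).symm
  letI : Fintype ι := Fintype.ofFinite ι
  let e₁ : A₀ ≃ₐ[ℝ] (ι → ℝ) := e.trans (AlgEquiv.piCongrRight ψ)
  have hcard : Fintype.card ι = n := by
    have h1 : finrank ℝ A₀ = finrank ℝ (ι → ℝ) := e₁.toLinearEquiv.finrank_eq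
    rw [hn, finrank_pi] at h1
    omega
  let σ : ι ≃ Fin n := Fintype.equivFinOfCardEq hcard
  let Φ : A₀ ≃ₐ[ℝ] (Fin n → ℝ) := e₁.trans (piReindexAlg σ)
  -- weights
  let b : Fin n → A₀ := fun i => Φ.symm (Pi.single i 1)
  have hb0 : ∀ i, b i ≠ 0 := by
    intro i h
    have : (Pi.single i (1:ℝ) : Fin n → ℝ) = 0 := by
      have := congrArg Φ h
      simpa [b] using this
    have h1 : (1 : ℝ) = 0 := by simpa using congrFun this i
    exact one_ne_zero h1
  have hbb : ∀ i, b i * b i = b i := by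
    intro i
    simp only [b, ← map_mul]
    congr 1
    funext j
    by_cases h : j = i
    · subst h; simp
    · simp [Pi.single_apply, h]
  refine ⟨fun i => ε (b i), fun i => ?_, Φ, fun x => ?_⟩
  · have := hpos (b i) (hb0 i)
    rwa [hbb i] at this
  · have hx : x = ∑ i, Φ x i • b i := by
      have : Φ x = ∑ i, Φ x i • (Pi.single i 1 : Fin n → ℝ) := by
        funext j
        simp [Pi.single_apply, Finset.sum_ite_eq']
      apply Φ.injective
      rw [map_sum]
      simp only [map_smul]
      simp only [b, AlgEquiv.apply_symm_apply]
      exact this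
    conv_lhs => rw [hx]
    rw [map_sum]
    simp only [map_smul, smul_eq_mul]
    congr 1
    funext i
    ring
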